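/- Let X be a right A-Galois object. Then there exists a nonzero invariant functional ψ_X on X, i.e. a nonzero linear functional ψ_X : X → k with (ψ_X ⊗ id)(α(x)) = ψ_X(x)·1 for all x ∈ X. -/

import Mathlib

open TensorProduct

noncomputable section

variable (k : Type*) [Field k]

/-- Apply a linear functional to the second tensor factor. -/
def applySnd {M N : Type*} [AddCommGroup M] [Module k M]
    [AddCommGroup N] [Module k N] (f : N →ₗ[k] k) : M ⊗[k] N →ₗ[k] M :=
  (TensorProduct.rid k M).toLinearMap ∘ₗ LinearMap.lTensor M f

/-- Apply a linear functional to the first tensor factor. -/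
def applyFst {M N : Type*} [AddCommGroup M] [Module k M]
    [AddCommGroup N] [Module k N] (f : M →ₗ[k] k) : M ⊗[k] N →ₗ[k] N :=
  (TensorProduct.lid k N).toLinearMap ∘ₗ LinearMap.rTensor N f

variable (A X : Type*) [Ring A] [HopfAlgebra k A] [Ring X] [Algebra k X]

/-- The Galois map `V : X ⊗ X → X ⊗ A`, `x ⊗ y ↦ (x ⊗ 1) * α y`. -/
def galoisV (α : X →ₐ[k] X ⊗[k] A) : X ⊗[k] X →ₗ[k] X ⊗[k] A :=
  LinearMap.mul' k (X ⊗[k] A) ∘ₗ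
    TensorProduct.map ((TensorProduct.mk k X A).flip 1) α.toLinearMap

/-- A Hopf algebra with bijective antipode and faithful left integral `φ`,
together with a right Galois coaction `α` on `X` with trivial coinvariants. -/
structure GaloisContext where
  φ : A →ₗ[k] k
  φ_ne : φ ≠ 0
  φ_integral : ∀ a : A, applySnd k φ (Coalgebra.comul a) = φ a • (1 : A)
  φ_faithful_left : ∀ a : A, (∀ b : A, φ (a * b) = 0) → a = 0
  φ_faithful_right : ∀ a : A, (∀ b : A, φ (b * a) = 0) → a = 0
  antipode_bijective : Function.Bijective (HopfAlgebra.antipode (R := k) (A := A))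
  α : X →ₐ[k] X ⊗[k] A
  coassoc : ∀ x : X,
    TensorProduct.assoc k X A A ((LinearMap.rTensor A α.toLinearMap) (α x))
      = LinearMap.lTensor X (Coalgebra.comul (R := k) (A := A)) (α x)
  counit_id : ∀ x : X,
    applySnd k (Coalgebra.counit (R := k) (A := A)) (α x) = x
  coinv_trivial : ∀ x : X, α x = x ⊗ₜ[k] (1 : A) → ∃ c : k, x = c • (1 : X)
  galois : Function.Bijective (galoisV k A X α)

variable {k A X}

/-- The Galois map as a linear equivalence. -/
def GaloisContext.V (G : GaloisContext k A X) : (X ⊗[k] X) ≃ₗ[k] (X ⊗[k] A) :=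
  LinearEquiv.ofBijective (galoisV k A X G.α) G.galois

/-- The map `β : A → X ⊗ X`, `a ↦ V⁻¹(1 ⊗ a)`. -/
def GaloisContext.β (G : GaloisContext k A X) : A →ₗ[k] X ⊗[k] X :=
  G.V.symm.toLinearMap ∘ₗ TensorProduct.mk k X A 1

end

open Coalgebra

noncomputable section Hopf

variable {k : Type*} [CommSemiring k] {A : Type*} [Semiring A] [Bialgebra k A]
variable {B : Type*} [Semiring B] [Algebra k B]

/-- convolution product on linear maps A →ₗ B -/
def conv (f g : A →ₗ[k] B) : A →ₗ[k] B :=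
  LinearMap.mul' k B ∘ₗ TensorProduct.map f g ∘ₗ Coalgebra.comul

/-- convolution unit -/
def cu : A →ₗ[k] B := Algebra.linearMap k B ∘ₗ Coalgebra.counit

lemma conv_repr (f g : A →ₗ[k] B) (a : A) {ι : Type*} (r : Coalgebra.Repr k a ι) :
    conv f g a = ∑ i ∈ r.index, f (r.left i) * g (r.right i) := by
  simp only [conv, LinearMap.comp_apply, ← r.eq, map_sum, TensorProduct.map_tmul,
    LinearMap.mul'_apply]

lemma cu_apply (a : A) : (cu : A →ₗ[k] B) a = algebraMap k B (Coalgebra.counit a) := rfl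

lemma sum_counit_smul_left (a : A) {ι : Type*} (r : Coalgebra.Repr k a ι) :
    ∑ i ∈ r.index, Coalgebra.counit (R := k) (r.left i) • r.right i = a := by
  have h := congrArg ((TensorProduct.lid k A).toLinearMap ∘ₗ
    LinearMap.rTensor A (Coalgebra.counit (R := k) (A := A))) r.eq
  simp only [map_sum, LinearMap.comp_apply, LinearMap.rTensor_tmul,
    TensorProduct.lid_tmul, LinearEquiv.coe_coe] at h
  rw [h, Coalgebra.rTensor_counit_comul, TensorProduct.lid_tmul, one_smul]

lemma sum_counit_smul_right (a : A) {ι : Type*} (r : Coalgebra.Repr k a ι) :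
    ∑ i ∈ r.index, Coalgebra.counit (R := k) (r.right i) • r.left i = a := by
  have h := congrArg ((TensorProduct.rid k A).toLinearMap ∘ₗ
    LinearMap.lTensor A (Coalgebra.counit (R := k) (A := A))) r.eq
  simp only [map_sum, LinearMap.comp_apply, LinearMap.lTensor_tmul,
    TensorProduct.rid_tmul, LinearEquiv.coe_coe] at h
  rw [h, Coalgebra.lTensor_counit_comul, TensorProduct.rid_tmul, one_smul]

lemma conv_cu_right (f : A →ₗ[k] B) : conv f cu = f := by
  ext a
  rw [conv_repr f cu a (ℛ k a)]
  calc ∑ i ∈ (ℛ k a).index, f ((ℛ k a).left i) * cu ((ℛ k a).right i)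
      = ∑ i ∈ (ℛ k a).index,
          Coalgebra.counit (R := k) ((ℛ k a).right i) • f ((ℛ k a).left i) := by
        refine Finset.sum_congr rfl fun i _ => ?_
        rw [cu_apply, ← Algebra.commutes, ← Algebra.smul_def]
    _ = f a := by
        conv_rhs => rw [← sum_counit_smul_right a (ℛ k a)]
        rw [map_sum]
        exact Finset.sum_congr rfl fun i _ => (map_smul f _ _).symm

lemma conv_cu_left (f : A →ₗ[k] B) : conv cu f = f := by
  ext a
  rw [conv_repr cu f a (ℛ k a)]
  calc ∑ i ∈ (ℛ k a).index, cu ((ℛ k a).left i) * f ((ℛ k a).right i)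
      = ∑ i ∈ (ℛ k a).index,
          Coalgebra.counit (R := k) ((ℛ k a).left i) • f ((ℛ k a).right i) := by
        refine Finset.sum_congr rfl fun i _ => ?_
        rw [cu_apply, ← Algebra.smul_def]
    _ = f a := by
        conv_rhs => rw [← sum_counit_smul_left a (ℛ k a)]
        rw [map_sum]
        exact Finset.sum_congr rfl fun i _ => (map_smul f _ _).symm

lemma conv_assoc (f g h : A →ₗ[k] B) : conv (conv f g) h = conv f (conv g h) := by
  ext a
  set r := ℛ k a
  set t : (i : A × A) → Coalgebra.Repr k (r.left i) (A × A) := fun i => ℛ k (r.left i)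
  set s : (i : A × A) → Coalgebra.Repr k (r.right i) (A × A) := fun i => ℛ k (r.right i)
  have key := congrArg
    (LinearMap.mul' k B ∘ₗ TensorProduct.map f (LinearMap.mul' k B ∘ₗ TensorProduct.map g h))
    (Coalgebra.sum_tmul_tmul_eq r t s)
  simp only [map_sum, LinearMap.comp_apply, TensorProduct.map_tmul,
    LinearMap.mul'_apply] at key
  rw [conv_repr (conv f g) h a r, conv_repr f (conv g h) a r]
  calc ∑ i ∈ r.index, conv f g (r.left i) * h (r.right i)
      = ∑ i ∈ r.index, ∑ j ∈ (t i).index,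
          f ((t i).left j) * (g ((t i).right j) * h (r.right i)) := by
        refine Finset.sum_congr rfl fun i _ => ?_
        rw [conv_repr f g _ (t i), Finset.sum_mul]
        exact Finset.sum_congr rfl fun j _ => mul_assoc _ _ _
    _ = ∑ i ∈ r.index, ∑ j ∈ (s i).index,
          f (r.left i) * (g ((s i).left j) * h ((s i).right j)) := key
    _ = ∑ i ∈ r.index, f (r.left i) * conv g h (r.right i) := by
        refine Finset.sum_congr rfl fun i _ => ?_
        rw [conv_repr g h _ (s i), Finset.mul_sum]

end Hopf

section Antipode

variable {k : Type*} [CommSemiring k] {A : Type*} [Semiring A] [HopfAlgebra k A]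

local notation "S" => HopfAlgebra.antipode (R := k) (A := A)

lemma antipode_one' : S (1 : A) = 1 := by
  have h := HopfAlgebra.mul_antipode_rTensor_comul_apply (R := k) (a := (1 : A))
  rw [Bialgebra.comul_one] at h
  rw [show ((1 : A ⊗[k] A)) = (1 : A) ⊗ₜ[k] (1 : A) from rfl, LinearMap.rTensor_tmul,
    LinearMap.mul'_apply, mul_one, Bialgebra.counit_one] at h
  rw [h, map_one]

/-- `Δ ∘ S` : the first candidate -/
private noncomputable def Fmap : A →ₗ[k] A ⊗[k] A := Coalgebra.comul ∘ₗ S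

/-- `τ ∘ (S ⊗ S) ∘ Δ` : the second candidate -/
private noncomputable def Gmap : A →ₗ[k] A ⊗[k] A :=
  (TensorProduct.comm k A A).toLinearMap ∘ₗ TensorProduct.map S S ∘ₗ Coalgebra.comul

lemma Gmap_repr (a : A) {ι : Type*} (r : Coalgebra.Repr k a ι) :
    (Gmap : A →ₗ[k] A ⊗[k] A) a = ∑ i ∈ r.index, S (r.right i) ⊗ₜ[k] S (r.left i) := by
  simp only [Gmap, LinearMap.comp_apply, ← r.eq, map_sum, TensorProduct.map_tmul,
    LinearEquiv.coe_coe, TensorProduct.comm_tmul]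

lemma conv_F_comul : conv (Fmap : A →ₗ[k] A ⊗[k] A) Coalgebra.comul = cu := by
  ext a
  rw [conv_repr _ _ a (ℛ k a)]
  calc ∑ i ∈ (ℛ k a).index, Fmap ((ℛ k a).left i) * Coalgebra.comul ((ℛ k a).right i)
      = Coalgebra.comul (R := k)
          (∑ i ∈ (ℛ k a).index, S ((ℛ k a).left i) * (ℛ k a).right i) := by
        rw [map_sum]
        exact Finset.sum_congr rfl fun i _ => (Bialgebra.comul_mul _ _).symm
    _ = cu a := by
        rw [HopfAlgebra.sum_antipode_mul_eq_algebraMap_counit (ℛ k a), cu_apply]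
        exact (Bialgebra.comulAlgHom k A).commutes _

lemma conv_comul_G : conv (Coalgebra.comul) (Gmap : A →ₗ[k] A ⊗[k] A) = cu := by
  ext a
  set r := ℛ k a with hr
  set t : (i : A × A) → Coalgebra.Repr k (r.left i) (A × A) := fun i => ℛ k (r.left i) with ht
  set s : (i : A × A) → Coalgebra.Repr k (r.right i) (A × A) := fun i => ℛ k (r.right i) with hs
  -- Θ₁ : A ⊗ (A ⊗ A) → A ⊗ A,  w ⊗ (c ⊗ d) ↦ (w ⊗ c) * G d
  set Θ₁ : A ⊗[k] (A ⊗[k] A) →ₗ[k] A ⊗[k] A :=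
    LinearMap.mul' k (A ⊗[k] A) ∘ₗ LinearMap.lTensor (A ⊗[k] A) (Gmap) ∘ₗ
      (TensorProduct.assoc k A A A).symm.toLinearMap with hΘ₁
  have hΘ₁app : ∀ (w c d : A), Θ₁ (w ⊗ₜ[k] (c ⊗ₜ[k] d)) = (w ⊗ₜ[k] c) * Gmap d := by
    intro w c d
    simp [hΘ₁, TensorProduct.assoc_symm_tmul]
  have key := congrArg Θ₁ (Coalgebra.sum_tmul_tmul_eq r t s)
  simp only [map_sum, hΘ₁app] at key
  -- LHS of key is conv Δ G a
  have lhs_eq : ∑ i ∈ r.index, ∑ j ∈ (t i).index,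
      ((t i).left j ⊗ₜ[k] (t i).right j) * Gmap (r.right i)
      = conv (Coalgebra.comul) (Gmap : A →ₗ[k] A ⊗[k] A) a := by
    rw [conv_repr _ _ a r]
    refine Finset.sum_congr rfl fun i _ => ?_
    rw [← Finset.sum_mul, (t i).eq]
  -- Now compute the RHS of key
  -- inner collapse: for each i, ∑ j (1 ⊗ u) * G v = S (r.right i) ⊗ 1
  have inner : ∀ i, ∑ j ∈ (s i).index,
      ((1 : A) ⊗ₜ[k] (s i).left j) * Gmap ((s i).right j)
      = S (r.right i) ⊗ₜ[k] (1 : A) := by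
    intro i
    set t' : (j : A × A) → Coalgebra.Repr k ((s i).left j) (A × A) :=
      fun j => ℛ k ((s i).left j) with ht'
    set s' : (j : A × A) → Coalgebra.Repr k ((s i).right j) (A × A) :=
      fun j => ℛ k ((s i).right j) with hs'
    -- Λ : c ⊗ (d ⊗ e) ↦ S e ⊗ (c * S d)
    set Λ : A ⊗[k] (A ⊗[k] A) →ₗ[k] A ⊗[k] A :=
      (TensorProduct.comm k A A).toLinearMap ∘ₗ
        TensorProduct.map (LinearMap.mul' k A ∘ₗ LinearMap.lTensor A S) S ∘ₗ
        (TensorProduct.assoc k A A A).symm.toLinearMap with hΛ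
    have hΛapp : ∀ (c d e : A), Λ (c ⊗ₜ[k] (d ⊗ₜ[k] e)) = S e ⊗ₜ[k] (c * S d) := by
      intro c d e
      simp [hΛ, TensorProduct.assoc_symm_tmul]
    have key2 := congrArg Λ (Coalgebra.sum_tmul_tmul_eq (s i) t' s')
    simp only [map_sum, hΛapp] at key2
    -- LHS of key2 : ∑ j ∑ m  S v ⊗ (u₁ * S u₂)  = ∑ j S v ⊗ ε(u) 1
    have l2 : ∑ j ∈ (s i).index, ∑ m ∈ (t' j).index,
        S ((s i).right j) ⊗ₜ[k] ((t' j).left m * S ((t' j).right m))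
        = ∑ j ∈ (s i).index,
            Coalgebra.counit (R := k) ((s i).left j) • (S ((s i).right j) ⊗ₜ[k] (1 : A)) := by
      refine Finset.sum_congr rfl fun j _ => ?_
      rw [← TensorProduct.tmul_sum, HopfAlgebra.sum_mul_antipode_eq_algebraMap_counit (t' j),
        Algebra.algebraMap_eq_smul_one, TensorProduct.tmul_smul]
    -- RHS of key2 : ∑ j ∑ m  S v₂ ⊗ (u * S v₁) = ∑ j (1 ⊗ u) * G v
    have r2 : ∑ j ∈ (s i).index, ∑ m ∈ (s' j).index,
        S ((s' j).right m) ⊗ₜ[k] ((s i).left j * S ((s' j).left m))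
        = ∑ j ∈ (s i).index,
            ((1 : A) ⊗ₜ[k] (s i).left j) * Gmap ((s i).right j) := by
      refine Finset.sum_congr rfl fun j _ => ?_
      rw [Gmap_repr _ (s' j), Finset.mul_sum]
      refine Finset.sum_congr rfl fun m _ => ?_
      rw [Algebra.TensorProduct.tmul_mul_tmul, one_mul]
    rw [l2, r2] at key2
    rw [← key2]
    have hcol : ∑ j ∈ (s i).index,
        Coalgebra.counit (R := k) ((s i).left j) • (S ((s i).right j) ⊗ₜ[k] (1 : A))
        = (∑ j ∈ (s i).index,
            Coalgebra.counit (R := k) ((s i).left j) • S ((s i).right j)) ⊗ₜ[k] (1 : A) := by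
      rw [TensorProduct.sum_tmul]
      exact Finset.sum_congr rfl fun j _ => (TensorProduct.smul_tmul' _ _ _).symm
    have hS : ∑ j ∈ (s i).index,
        Coalgebra.counit (R := k) ((s i).left j) • S ((s i).right j) = S (r.right i) := by
      calc ∑ j ∈ (s i).index, Coalgebra.counit (R := k) ((s i).left j) • S ((s i).right j)
          = S (∑ j ∈ (s i).index, Coalgebra.counit (R := k) ((s i).left j) • (s i).right j) := by
            rw [map_sum]
            exact Finset.sum_congr rfl fun j _ => (map_smul _ _ _).symm
        _ = S (r.right i) := by rw [sum_counit_smul_left _ (s i)]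
    rw [hcol, hS]
  -- assemble
  have rhs_eq : ∑ i ∈ r.index, ∑ j ∈ (s i).index,
      (r.left i ⊗ₜ[k] (s i).left j) * Gmap ((s i).right j)
      = algebraMap k (A ⊗[k] A) (Coalgebra.counit a) := by
    calc ∑ i ∈ r.index, ∑ j ∈ (s i).index,
        (r.left i ⊗ₜ[k] (s i).left j) * Gmap ((s i).right j)
        = ∑ i ∈ r.index, (r.left i ⊗ₜ[k] (1 : A)) *
            (∑ j ∈ (s i).index, ((1 : A) ⊗ₜ[k] (s i).left j) * Gmap ((s i).right j)) := by
          refine Finset.sum_congr rfl fun i _ => ?_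
          rw [Finset.mul_sum]
          refine Finset.sum_congr rfl fun j _ => ?_
          rw [← mul_assoc, Algebra.TensorProduct.tmul_mul_tmul, mul_one, one_mul]
      _ = ∑ i ∈ r.index, (r.left i * S (r.right i)) ⊗ₜ[k] (1 : A) := by
          refine Finset.sum_congr rfl fun i _ => ?_
          rw [inner i, Algebra.TensorProduct.tmul_mul_tmul, mul_one]
      _ = algebraMap k (A ⊗[k] A) (Coalgebra.counit a) := by
          rw [← TensorProduct.sum_tmul, HopfAlgebra.sum_mul_antipode_eq_algebraMap_counit r,
            Algebra.TensorProduct.algebraMap_apply]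
  rw [← lhs_eq, key, rhs_eq, cu_apply]

lemma comul_antipode' :
    (Coalgebra.comul ∘ₗ S : A →ₗ[k] A ⊗[k] A) =
      (TensorProduct.comm k A A).toLinearMap ∘ₗ TensorProduct.map S S ∘ₗ Coalgebra.comul := by
  have : (Fmap : A →ₗ[k] A ⊗[k] A) = Gmap := by
    calc (Fmap : A →ₗ[k] A ⊗[k] A)
        = conv Fmap cu := (conv_cu_right _).symm
      _ = conv Fmap (conv Coalgebra.comul Gmap) := by rw [conv_comul_G]
      _ = conv (conv Fmap Coalgebra.comul) Gmap := (conv_assoc _ _ _).symm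
      _ = conv cu Gmap := by rw [conv_F_comul]
      _ = Gmap := conv_cu_left _
  exact this

end Antipode

noncomputable section Aux

open Coalgebra

variable {k : Type*} [Field k] {A : Type*} [Ring A] [HopfAlgebra k A]

lemma applySnd_tmul {M N : Type*} [AddCommGroup M] [Module k M]
    [AddCommGroup N] [Module k N] (f : N →ₗ[k] k) (m : M) (n : N) :
    applySnd k f (m ⊗ₜ[k] n) = f n • m := by
  simp [applySnd]

lemma applyFst_tmul {M N : Type*} [AddCommGroup M] [Module k M]
    [AddCommGroup N] [Module k N] (f : M →ₗ[k] k) (m : M) (n : N) :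
    applyFst k f (m ⊗ₜ[k] n) = f m • n := by
  simp [applyFst]

/-- `φ ∘ S` is a right integral whenever `φ` is a left integral. -/
lemma rho_right_integral (φ : A →ₗ[k] k)
    (hφ : ∀ a : A, applySnd k φ (Coalgebra.comul a) = φ a • (1 : A))
    (hS : Function.Injective (HopfAlgebra.antipode (R := k) (A := A))) (a : A) :
    applyFst k (φ ∘ₗ HopfAlgebra.antipode (R := k) (A := A)) (Coalgebra.comul a)
      = φ (HopfAlgebra.antipode (R := k) (A := A) a) • (1 : A) := by
  set S' : A →ₗ[k] A := HopfAlgebra.antipode (R := k) (A := A) with hS'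
  set r := ℛ k a with hr
  have hcomulS : Coalgebra.comul (R := k) (S' a)
      = ∑ i ∈ r.index, S' (r.right i) ⊗ₜ[k] S' (r.left i) := by
    have := congrArg (fun g : A →ₗ[k] A ⊗[k] A => g a) (comul_antipode' (k := k) (A := A))
    simp only [LinearMap.comp_apply] at this
    rw [hS', this, ← r.eq, map_sum, map_sum]
    refine Finset.sum_congr rfl fun i _ => ?_
    simp
  have h1 := hφ (S' a)
  rw [hcomulS, map_sum] at h1
  have h1' : ∑ i ∈ r.index, φ (S' (r.left i)) • S' (r.right i) = φ (S' a) • (1 : A) := by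
    rw [← h1]
    exact Finset.sum_congr rfl fun i _ => (applySnd_tmul _ _ _).symm
  have hlhs : applyFst k (φ ∘ₗ S') (Coalgebra.comul a)
      = ∑ i ∈ r.index, φ (S' (r.left i)) • r.right i := by
    rw [← r.eq, map_sum]
    exact Finset.sum_congr rfl fun i _ => applyFst_tmul _ _ _
  apply hS
  show S' _ = S' _
  rw [hlhs, map_sum, map_smul]
  calc ∑ i ∈ r.index, S' (φ (S' (r.left i)) • r.right i)
      = ∑ i ∈ r.index, φ (S' (r.left i)) • S' (r.right i) := by
        exact Finset.sum_congr rfl fun i _ => map_smul _ _ _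
    _ = φ (S' a) • (1 : A) := h1'
    _ = φ (S' a) • S' 1 := by rw [antipode_one']

variable {X : Type*} [Ring X] [Algebra k X]

lemma applySnd_one_mul (ρ : A →ₗ[k] k) (x : X) (t : X ⊗[k] A) :
    applySnd k ρ ((x ⊗ₜ[k] (1 : A)) * t) = x * applySnd k ρ t := by
  induction t with
  | zero => simp
  | tmul u v => rw [Algebra.TensorProduct.tmul_mul_tmul, one_mul, applySnd_tmul,
      applySnd_tmul, mul_smul_comm]
  | add t1 t2 h1 h2 => rw [mul_add, map_add, map_add, h1, h2, mul_add]

lemma claimI_aux (f : X →ₗ[k] k) (ρ : A →ₗ[k] k) (s : X ⊗[k] A) (a : A) :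
    applyFst k f (LinearMap.lTensor X (applyFst k ρ)
        ((TensorProduct.assoc k X A A) (s ⊗ₜ[k] a)))
      = f (applySnd k ρ s) • a := by
  induction s with
  | zero =>
      rw [TensorProduct.zero_tmul, LinearEquiv.map_zero, LinearMap.map_zero,
        LinearMap.map_zero, LinearMap.map_zero, LinearMap.map_zero, zero_smul]
  | tmul u v =>
      rw [TensorProduct.assoc_tmul, LinearMap.lTensor_tmul, applyFst_tmul, applyFst_tmul,
        applySnd_tmul, map_smul, smul_smul, mul_comm, smul_eq_mul]
  | add s1 s2 h1 h2 =>
      simp only [TensorProduct.add_tmul, map_add]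
      rw [h1, h2, add_smul]

end Aux

theorem galois_object_exists_invariant_functional
    {k : Type*} [Field k] {A X : Type*} [Ring A] [HopfAlgebra k A]
    [Ring X] [Algebra k X] [Nontrivial X]
    (G : GaloisContext k A X) :
    ∃ ψX : X →ₗ[k] k, ψX ≠ 0 ∧
      ∀ x : X, applyFst k ψX (G.α x) = ψX x • (1 : A) := by
  classical
  obtain ⟨hSi, hSs⟩ := G.antipode_bijective
  set ρ : A →ₗ[k] k := G.φ ∘ₗ HopfAlgebra.antipode (R := k) (A := A) with hρ
  have hρint : ∀ a : A, applyFst k ρ (Coalgebra.comul a) = ρ a • (1 : A) := by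
    intro a
    exact rho_right_integral G.φ G.φ_integral hSi a
  have hρne : ρ ≠ 0 := by
    intro h0
    apply G.φ_ne
    ext a
    obtain ⟨b, hb⟩ := hSs a
    have hb2 : ρ b = 0 := by rw [h0]; rfl
    rw [hρ] at hb2
    simpa [hb] using hb2
  -- find x₀ with (id ⊗ ρ)(α x₀) ≠ 0
  have hE : ∃ x : X, applySnd k ρ (G.α x) ≠ 0 := by
    by_contra h
    push_neg at h
    have hz : ∀ t : X ⊗[k] A, applySnd k ρ t = 0 := by
      intro t
      obtain ⟨s, rfl⟩ := G.galois.2 t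
      induction s with
      | zero => simp
      | tmul x y =>
          have hgal : galoisV k A X G.α (x ⊗ₜ[k] y) = (x ⊗ₜ[k] (1 : A)) * G.α y := by
            simp [galoisV, LinearMap.mul'_apply]
          rw [hgal, applySnd_one_mul, h y, mul_zero]
      | add s1 s2 h1 h2 => rw [map_add, map_add, h1, h2, add_zero]
    apply hρne
    ext a
    have h1 := hz ((1 : X) ⊗ₜ[k] a)
    rw [applySnd_tmul] at h1
    rcases smul_eq_zero.mp h1 with h2 | h2
    · exact h2
    · exact absurd h2 one_ne_zero
  obtain ⟨x₀, hx₀⟩ := hE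
  obtain ⟨f, hf⟩ : ∃ f : X →ₗ[k] k, f (applySnd k ρ (G.α x₀)) ≠ 0 := by
    by_contra h
    push_neg at h
    exact hx₀ ((Module.forall_dual_apply_eq_zero_iff k _).mp h)
  set ψ : X →ₗ[k] k := f ∘ₗ applySnd k ρ ∘ₗ G.α.toLinearMap with hψ
  have hψx : ∀ x : X, ψ x = f (applySnd k ρ (G.α x)) := fun x => rfl
  refine ⟨ψ, ?_, ?_⟩
  · intro h0
    apply hf
    rw [← hψx x₀, h0]
    rfl
  · intro x
    -- apply N := (f ⊗ id) ∘ (id ⊗ (ρ ⊗ id)) to both sides of coassociativity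
    have main1 : ∀ t : X ⊗[k] A,
        applyFst k f (LinearMap.lTensor X (applyFst k ρ)
          ((TensorProduct.assoc k X A A) (LinearMap.rTensor A G.α.toLinearMap t)))
        = applyFst k ψ t := by
      intro t
      induction t with
      | zero =>
          rw [LinearMap.map_zero, LinearEquiv.map_zero, LinearMap.map_zero,
            LinearMap.map_zero, LinearMap.map_zero]
      | tmul u a =>
          rw [LinearMap.rTensor_tmul, claimI_aux, applyFst_tmul, hψx]
          rfl
      | add t1 t2 h1 h2 =>
          simp only [map_add]
          rw [h1, h2]
    have main2 : ∀ t : X ⊗[k] A,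
        applyFst k f (LinearMap.lTensor X (applyFst k ρ)
          (LinearMap.lTensor X (Coalgebra.comul (R := k) (A := A)) t))
        = f (applySnd k ρ t) • (1 : A) := by
      intro t
      induction t with
      | zero => simp only [map_zero, zero_smul]
      | tmul u a =>
          rw [LinearMap.lTensor_tmul, LinearMap.lTensor_tmul, hρint, applySnd_tmul,
            TensorProduct.tmul_smul, map_smul, applyFst_tmul, map_smul, smul_smul, smul_eq_mul]
      | add t1 t2 h1 h2 =>
          simp only [map_add]
          rw [h1, h2, add_smul]
    have hco := G.coassoc x
    have := congrArg (fun t => applyFst k f (LinearMap.lTensor X (applyFst k ρ) t)) hco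
    rw [← main1 (G.α x), this, main2 (G.α x), hψx]
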